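/- Let S be a set of nonzero d×d partial permutation matrices spanning a complex vector space of dimension exactly r, such that every column index 1 ≤ c ≤ d is occupied by some matrix in S (i.e., some matrix in S has a nonzero entry in column c). Then the number of covering subsets of S is at most B_{r+1}, the (r+1)-st Bell number. -/

import Mathlib

/-- A `d × d` partial permutation matrix over `ℂ`: a 0-1 matrix in which every row
and every column contains at most one nonzero entry. -/
def IsPartialPermMatrix {d : ℕ} (M : Matrix (Fin d) (Fin d) ℂ) : Prop :=
  (∀ i j, M i j = 0 ∨ M i j = 1) ∧
  (∀ i j j', M i j ≠ 0 → M i j' ≠ 0 → j = j') ∧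
  (∀ i i' j, M i j ≠ 0 → M i' j ≠ 0 → i = i')

/-- `M` occupies column `c` if it has a nonzero entry in column `c`. -/
def Occupies {d : ℕ} (M : Matrix (Fin d) (Fin d) ℂ) (c : Fin d) : Prop :=
  ∃ i, M i c ≠ 0

/-- `S'` is a covering subset of `S`: `S' ⊆ S`, no two matrices of `S'` occupy a
common column, and every column is occupied by some matrix in `S'`. -/
def IsCoveringSubset {d : ℕ} (S S' : Set (Matrix (Fin d) (Fin d) ℂ)) : Prop :=
  S' ⊆ S ∧
  (∀ M ∈ S', ∀ N ∈ S', M ≠ N → ∀ c, ¬(Occupies M c ∧ Occupies N c)) ∧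
  (∀ c, ∃ M ∈ S', Occupies M c)

/-- The `n`-th Bell number: the number of equivalence relations (partitions)
on a set with `n` elements. -/
noncomputable def bell (n : ℕ) : ℕ := Nat.card (Setoid (Fin n))


instance setoidFinite {α : Type*} [Finite α] : Finite (Setoid α) :=
  Finite.of_injective (fun s => s.r) (by
    intro s t h
    exact Setoid.ext fun a b => iff_of_eq (congrFun (congrFun h a) b))

open Module in
lemma exists_keys {M : Type*} [AddCommGroup M] [Module ℂ M] {ι : Type*} [Fintype ι]
    [DecidableEq ι] (φ : ι → M →ₗ[ℂ] ℂ)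
    (hsep : ∀ m : M, (∀ i, φ i m = 0) → m = 0) :
    ∀ (n : ℕ) (W : Submodule ℂ M), FiniteDimensional ℂ W → finrank ℂ W ≤ n →
      ∃ K : Finset ι, K.card ≤ n ∧ ∀ f ∈ W, (∀ i ∈ K, φ i f = 0) → f = 0 := by
  intro n
  induction n with
  | zero =>
    intro W hfd hle
    refine ⟨∅, le_rfl, fun f hf _ => ?_⟩
    have hW : W = ⊥ := Submodule.finrank_eq_zero.mp (Nat.le_zero.mp hle)
    simpa [hW] using hf
  | succ n ih =>
    intro W hfd hle
    by_cases h : ∀ f ∈ W, f = 0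
    · exact ⟨∅, Nat.zero_le _, fun f hf _ => h f hf⟩
    push_neg at h
    obtain ⟨f, hfW, hf0⟩ := h
    obtain ⟨i, hi⟩ : ∃ i, φ i f ≠ 0 := by
      by_contra hc; push_neg at hc; exact hf0 (hsep f hc)
    set W' := W ⊓ LinearMap.ker (φ i) with hW'
    have hlt : W' < W := lt_of_le_of_ne inf_le_left (by
      intro he
      have : f ∈ W' := he ▸ hfW
      exact hi this.2)
    have hfd' : FiniteDimensional ℂ W' := Submodule.finiteDimensional_of_le inf_le_left
    have hrk : finrank ℂ W' ≤ n := by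
      have := Submodule.finrank_lt_finrank_of_lt (hlt)
      omega
    obtain ⟨K', hK'c, hK'⟩ := ih W' hfd' hrk
    refine ⟨insert i K', ?_, ?_⟩
    · calc (insert i K').card ≤ K'.card + 1 := Finset.card_insert_le _ _
        _ ≤ n + 1 := by omega
    · intro g hg h0
      have hgW' : g ∈ W' := ⟨hg, h0 i (Finset.mem_insert_self _ _)⟩
      exact hK' g hgW' fun j hj => h0 j (Finset.mem_insert_of_mem hj)

theorem stmt9 {d r : ℕ} (S : Set (Matrix (Fin d) (Fin d) ℂ))
    (hpp : ∀ M ∈ S, IsPartialPermMatrix M ∧ M ≠ 0)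
    (hrank : Module.finrank ℂ ↥(Submodule.span ℂ S) = r)
    (hocc : ∀ c : Fin d, ∃ M ∈ S, Occupies M c) :
    {S' : Set (Matrix (Fin d) (Fin d) ℂ) | IsCoveringSubset S S'}.ncard
      ≤ bell (r + 1) := by
  classical
  -- evaluation functionals
  set V := Submodule.span ℂ S with hV
  let φ : (Fin d × Fin d) → Matrix (Fin d) (Fin d) ℂ →ₗ[ℂ] ℂ := fun p =>
    { toFun := fun M => M p.1 p.2
      map_add' := fun _ _ => rfl
      map_smul' := fun _ _ => rfl }
  have hsep : ∀ m : Matrix (Fin d) (Fin d) ℂ, (∀ p, φ p m = 0) → m = 0 := by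
    intro m h
    ext i j
    exact h (i, j)
  obtain ⟨K, hKcard, hK⟩ := exists_keys φ hsep r V inferInstance (le_of_eq hrank)
  -- zero at all keys implies zero, for elements of the span
  have hKsep : ∀ A B : Matrix (Fin d) (Fin d) ℂ, A ∈ V → B ∈ V →
      (∀ p ∈ K, A p.1 p.2 = B p.1 p.2) → A = B := by
    intro A B hA hB h
    have := hK (A - B) (Submodule.sub_mem V hA hB) (fun p hp => by
      change (A - B) p.1 p.2 = 0
      simp [φ, Matrix.sub_apply, h p hp])
    exact sub_eq_zero.mp this
  -- embedding K into Fin (r+1) avoiding the last element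
  have hcard : Fintype.card ↥K ≤ r := by rw [Fintype.card_coe]; exact hKcard
  let e : ↥K ≃ Fin (Fintype.card ↥K) := Fintype.equivFin ↥K
  let emb : ↥K → Fin (r + 1) := fun p => ⟨(e p).val, by have := (e p).isLt; omega⟩
  have emb_inj : Function.Injective emb := by
    intro p q h
    apply e.injective
    exact Fin.ext (congrArg Fin.val h : ((⟨(e p).val, _⟩ : Fin (r+1)).val = _))
  have emb_ne_last : ∀ p, emb p ≠ Fin.last r := by
    intro p h
    have := (e p).isLt
    have : (emb p).val = r := congrArg Fin.val h
    simp only [emb] at this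
    omega
  -- every matrix in S has a nonzero key
  have hkey_ex : ∀ N ∈ S, ∃ p : ↥K, N (p : Fin d × Fin d).1 (p : Fin d × Fin d).2 ≠ 0 := by
    intro N hN
    by_contra hc
    push_neg at hc
    exact (hpp N hN).2 (hK N (Submodule.subset_span hN) fun p hp => by
      exact hc ⟨p, hp⟩)
  -- class function
  let classOf : Set (Matrix (Fin d) (Fin d) ℂ) → Fin (r + 1) → Option (Matrix (Fin d) (Fin d) ℂ) :=
    fun S' i => if h : ∃ N, N ∈ S' ∧ ∃ p : ↥K, emb p = i ∧
        N (p : Fin d × Fin d).1 (p : Fin d × Fin d).2 ≠ 0 then some h.choose else none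
  -- uniqueness of the matrix nonzero at a given key, within a covering subset
  have huniq : ∀ S', IsCoveringSubset S S' → ∀ N₁ N₂, N₁ ∈ S' → N₂ ∈ S' →
      ∀ p : ↥K, N₁ (p : Fin d × Fin d).1 (p : Fin d × Fin d).2 ≠ 0 →
        N₂ (p : Fin d × Fin d).1 (p : Fin d × Fin d).2 ≠ 0 → N₁ = N₂ := by
    intro S' hS' N₁ N₂ h1 h2 p hp1 hp2
    by_contra hne
    exact hS'.2.1 N₁ h1 N₂ h2 hne (p : Fin d × Fin d).2
      ⟨⟨(p : Fin d × Fin d).1, hp1⟩, ⟨(p : Fin d × Fin d).1, hp2⟩⟩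
  have hclass_some : ∀ S', IsCoveringSubset S S' → ∀ i N,
      classOf S' i = some N ↔ (N ∈ S' ∧ ∃ p : ↥K, emb p = i ∧
        N (p : Fin d × Fin d).1 (p : Fin d × Fin d).2 ≠ 0) := by
    intro S' hS' i N
    constructor
    · intro h
      simp only [classOf] at h
      split_ifs at h with hex
      · have := hex.choose_spec
        rw [Option.some_inj] at h
        exact h ▸ this
    · intro ⟨hN, p, hpi, hp0⟩
      have hex : ∃ N', N' ∈ S' ∧ ∃ p : ↥K, emb p = i ∧
          N' (p : Fin d × Fin d).1 (p : Fin d × Fin d).2 ≠ 0 := ⟨N, hN, p, hpi, hp0⟩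
      simp only [classOf, dif_pos hex]
      obtain ⟨hN', q, hqi, hq0⟩ := hex.choose_spec
      have hq : q = p := emb_inj (hqi.trans hpi.symm)
      rw [hq] at hq0
      exact congrArg some (huniq S' hS' _ N hN' hN p hq0 hp0)
  have hclass_last : ∀ S', classOf S' (Fin.last r) = none := by
    intro S'
    simp only [classOf]
    rw [dif_neg]
    rintro ⟨N, _, p, hpi, _⟩
    exact emb_ne_last p hpi
  -- injectivity of S' ↦ Setoid.ker (classOf S')
  have hsubset : ∀ S₁ S₂, IsCoveringSubset S S₁ → IsCoveringSubset S S₂ →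
      Setoid.ker (classOf S₁) = Setoid.ker (classOf S₂) → S₁ ⊆ S₂ := by
    intro S₁ S₂ h1 h2 heq N hN
    have hrel : ∀ x y, classOf S₁ x = classOf S₁ y ↔ classOf S₂ x = classOf S₂ y := by
      intro x y
      have := Setoid.ext_iff.mp heq x y
      exact this
    obtain ⟨p, hp⟩ := hkey_ex N (h1.1 hN)
    have hc1 : classOf S₁ (emb p) = some N :=
      (hclass_some S₁ h1 (emb p) N).mpr ⟨hN, p, rfl, hp⟩
    have hne : classOf S₂ (emb p) ≠ none := by
      intro hcn
      have : classOf S₁ (emb p) = classOf S₁ (Fin.last r) := by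
        apply (hrel _ _).mpr
        rw [hcn, hclass_last]
      rw [hc1, hclass_last] at this
      exact absurd this (Option.some_ne_none N)
    obtain ⟨N₂, hN₂eq⟩ := Option.ne_none_iff_exists'.mp hne
    obtain ⟨hN₂, q, hqi, hq0⟩ := (hclass_some S₂ h2 (emb p) N₂).mp hN₂eq
    have hqp : q = p := emb_inj hqi
    rw [hqp] at hq0
    -- show N = N₂ by comparing key values
    have hkeys : ∀ t : ↥K, N (t : Fin d × Fin d).1 (t : Fin d × Fin d).2
        = N₂ (t : Fin d × Fin d).1 (t : Fin d × Fin d).2 := by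
      intro t
      have h01N := (hpp N (h1.1 hN)).1.1
      have h01N₂ := (hpp N₂ (h2.1 hN₂)).1.1
      by_cases ht : N (t : Fin d × Fin d).1 (t : Fin d × Fin d).2 ≠ 0
      · have hc1t : classOf S₁ (emb t) = some N :=
          (hclass_some S₁ h1 (emb t) N).mpr ⟨hN, t, rfl, ht⟩
        have : classOf S₂ (emb t) = classOf S₂ (emb p) :=
          (hrel _ _).mp (by rw [hc1t, hc1])
        rw [hN₂eq] at this
        obtain ⟨_, q', hq'i, hq'0⟩ := (hclass_some S₂ h2 (emb t) N₂).mp this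
        have : q' = t := emb_inj hq'i
        rw [this] at hq'0
        rcases h01N (t : Fin d × Fin d).1 (t : Fin d × Fin d).2 with h | h
        · exact absurd h ht
        rcases h01N₂ (t : Fin d × Fin d).1 (t : Fin d × Fin d).2 with h' | h'
        · exact absurd h' hq'0
        rw [h, h']
      · push_neg at ht
        rw [ht]
        by_contra ht2
        have ht2' : N₂ (t : Fin d × Fin d).1 (t : Fin d × Fin d).2 ≠ 0 := fun h => ht2 h.symm
        have hc2t : classOf S₂ (emb t) = some N₂ :=
          (hclass_some S₂ h2 (emb t) N₂).mpr ⟨hN₂, t, rfl, ht2'⟩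
        have : classOf S₁ (emb t) = classOf S₁ (emb p) :=
          (hrel _ _).mpr (by rw [hc2t, hN₂eq])
        rw [hc1] at this
        obtain ⟨_, q', hq'i, hq'0⟩ := (hclass_some S₁ h1 (emb t) N).mp this
        have : q' = t := emb_inj hq'i
        rw [this] at hq'0
        exact hq'0 ht
    have : N = N₂ := by
      apply hKsep N N₂ (Submodule.subset_span (h1.1 hN)) (Submodule.subset_span (h2.1 hN₂))
      intro pp hpp'
      exact hkeys ⟨pp, hpp'⟩
    rw [this]; exact hN₂
  -- conclude
  have hinj : Function.Injective
      (fun S' : {S' : Set (Matrix (Fin d) (Fin d) ℂ) | IsCoveringSubset S S'} =>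
        Setoid.ker (classOf S'.1)) := by
    intro S₁ S₂ h
    exact Subtype.ext (Set.Subset.antisymm
      (hsubset _ _ S₁.2 S₂.2 h) (hsubset _ _ S₂.2 S₁.2 h.symm))
  calc {S' : Set (Matrix (Fin d) (Fin d) ℂ) | IsCoveringSubset S S'}.ncard
      = Nat.card {S' : Set (Matrix (Fin d) (Fin d) ℂ) | IsCoveringSubset S S'} :=
        (Nat.card_coe_set_eq _).symm
    _ ≤ Nat.card (Setoid (Fin (r + 1))) := Nat.card_le_card_of_injective _ hinj
    _ = bell (r + 1) := rfl
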